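/- The Cauchy transform of Wigner's semicircle law is G(z) = (z − √(z²−4))/2: for z outside [−2,2] (e.g., real z > 2), ∫_{−2}^{2} (z−s)^{−1} √(4−s²)/(2π) ds = (z − √(z²−4))/2. -/

import Mathlib

open Real intervalIntegral MeasureTheory Set

theorem semicircle_cauchy_transform (z : ℝ) (hz : 2 < z) :
    (∫ s in (-2 : ℝ)..2, (z - s)⁻¹ * (Real.sqrt (4 - s ^ 2) / (2 * Real.pi))) =
      (z - Real.sqrt (z ^ 2 - 4)) / 2 := by
  set B := Real.sqrt (z ^ 2 - 4) with hBdef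
  have hz2 : (0:ℝ) < z ^ 2 - 4 := by nlinarith
  have hBsq : B ^ 2 = z ^ 2 - 4 := Real.sq_sqrt hz2.le
  have hBpos : 0 < B := Real.sqrt_pos.mpr hz2
  have h4 : Real.sqrt 4 = 2 := by
    rw [show (4:ℝ) = 2 ^ 2 by norm_num, Real.sqrt_sq (by norm_num : (0:ℝ) ≤ 2)]
  set g : ℝ → ℝ := fun s => Real.sqrt (4 - s ^ 2) / (z - s) with hgdef
  set F : ℝ → ℝ := fun s =>
    z * Real.arcsin (s / 2) - Real.sqrt (4 - s ^ 2)
      + B * Real.arcsin ((4 - z * s) / (2 * (z - s))) with hFdef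
  have hzs : ∀ s : ℝ, s ≤ 2 → 0 < z - s := fun s hs => by linarith
  -- continuity of g on Icc
  have hg_cont : ContinuousOn g (Icc (-2:ℝ) 2) := by
    apply ContinuousOn.div
    · exact (Real.continuous_sqrt.comp (by continuity)).continuousOn
    · exact (continuous_const.sub continuous_id).continuousOn
    · intro s hs; exact (hzs s hs.2).ne'
  have hg_int : IntervalIntegrable g volume (-2) 2 := by
    apply ContinuousOn.intervalIntegrable
    rwa [Set.uIcc_of_le (by norm_num : (-2:ℝ) ≤ 2)]
  -- continuity of F on Icc
  have hF_cont : ContinuousOn F (Icc (-2:ℝ) 2) := by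
    apply ContinuousOn.add
    · apply ContinuousOn.sub
      · exact (continuous_const.mul
          (Real.continuous_arcsin.comp (by continuity))).continuousOn
      · exact (Real.continuous_sqrt.comp (by continuity)).continuousOn
    · apply ContinuousOn.mul continuousOn_const
      apply Real.continuous_arcsin.comp_continuousOn
      apply ContinuousOn.div
      · exact (by continuity : Continuous fun s : ℝ => 4 - z * s).continuousOn
      · exact (by continuity : Continuous fun s : ℝ => 2 * (z - s)).continuousOn
      · intro s hs
        have := hzs s hs.2; positivity
  -- derivative of F on Ioo
  have hderiv : ∀ s ∈ Ioo (-2:ℝ) 2, HasDerivAt F (g s) s := by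
    intro s hs
    obtain ⟨hs1, hs2⟩ := hs
    have hzs' : 0 < z - s := hzs s hs2.le
    have hA : (0:ℝ) < 4 - s ^ 2 := by nlinarith
    set A := Real.sqrt (4 - s ^ 2) with hAdef
    have hAsq : A ^ 2 = 4 - s ^ 2 := Real.sq_sqrt hA.le
    have hApos : 0 < A := Real.sqrt_pos.mpr hA
    set u : ℝ := (4 - z * s) / (2 * (z - s)) with hudef
    -- sqrt simplifications
    have hsq1 : Real.sqrt (1 - (s / 2) ^ 2) = A / 2 := by
      rw [show (1 - (s/2) ^ 2 : ℝ) = (4 - s ^ 2) / 4 by ring,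
        Real.sqrt_div hA.le, h4]
    have hu2 : 1 - u ^ 2 = ((z ^ 2 - 4) * (4 - s ^ 2)) / (2 * (z - s)) ^ 2 := by
      rw [hudef]; field_simp; ring
    have hu2pos : 0 < 1 - u ^ 2 := by
      rw [hu2]; positivity
    have hsq2 : Real.sqrt (1 - u ^ 2) = B * A / (2 * (z - s)) := by
      rw [hu2, Real.sqrt_div (by positivity), Real.sqrt_mul hz2.le,
        Real.sqrt_sq (by positivity : (0:ℝ) ≤ 2 * (z - s))]
    have hune1 : u ≠ 1 := by
      intro h; rw [h] at hu2pos; norm_num at hu2pos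
    have hunem1 : u ≠ -1 := by
      intro h; rw [h] at hu2pos; norm_num at hu2pos
    -- piece 1
    have hin1 : HasDerivAt (fun x : ℝ => x / 2) (1/2 : ℝ) s := by
      simpa using (hasDerivAt_id s).div_const 2
    have hsne1 : (s/2 : ℝ) ≠ -1 := by
      intro h; rw [div_eq_iff (by norm_num : (2:ℝ) ≠ 0)] at h; linarith
    have hsne2 : (s/2 : ℝ) ≠ 1 := by
      intro h; rw [div_eq_iff (by norm_num : (2:ℝ) ≠ 0)] at h; linarith
    have hd1 : HasDerivAt (fun x : ℝ => z * Real.arcsin (x / 2))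
        (z * (1 / Real.sqrt (1 - (s/2) ^ 2) * (1/2))) s :=
      by have := (Real.hasDerivAt_arcsin hsne1 hsne2).comp s hin1; exact this.const_mul z
    -- piece 2
    have hd2 : HasDerivAt (fun x : ℝ => Real.sqrt (4 - x ^ 2))
        ((-(2 * s)) / (2 * A)) s := by
      have hin2 : HasDerivAt (fun x : ℝ => 4 - x ^ 2) (-(2 * s)) s := by
        simpa using (hasDerivAt_pow 2 s).const_sub 4
      exact hin2.sqrt hA.ne'
    -- piece 3
    have hnum : HasDerivAt (fun x : ℝ => 4 - z * x) (-z) s := by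
      simpa using ((hasDerivAt_id s).const_mul z).const_sub 4
    have hden : HasDerivAt (fun x : ℝ => 2 * (z - x)) (-2 : ℝ) s := by
      simpa using ((hasDerivAt_id s).const_sub z).const_mul 2
    have hdu : HasDerivAt (fun x : ℝ => (4 - z * x) / (2 * (z - x)))
        (((-z) * (2 * (z - s)) - (4 - z * s) * (-2)) / (2 * (z - s)) ^ 2) s :=
      hnum.div hden (by positivity)
    have hd3 : HasDerivAt
        (fun x : ℝ => B * Real.arcsin ((4 - z * x) / (2 * (z - x))))
        (B * (1 / Real.sqrt (1 - u ^ 2) *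
          (((-z) * (2 * (z - s)) - (4 - z * s) * (-2)) / (2 * (z - s)) ^ 2))) s :=
      by have := (Real.hasDerivAt_arcsin hunem1 hune1).comp s hdu; exact this.const_mul B
    have htot := (hd1.sub hd2).add hd3
    have key : g s = z * (1 / Real.sqrt (1 - (s/2) ^ 2) * (1/2))
        - (-(2*s))/(2*A)
        + B * (1 / Real.sqrt (1 - u ^ 2) *
          (((-z) * (2 * (z - s)) - (4 - z * s) * (-2)) / (2 * (z - s)) ^ 2)) := by
      show Real.sqrt (4 - s ^ 2) / (z - s) = _
      rw [hsq1, hsq2, ← hAdef]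
      have h1 : B * (1 / (B*A/(2*(z-s))) *
          (((-z)*(2*(z-s)) - (4-z*s)*(-2))/(2*(z-s))^2))
          = -((z^2-4)/(A*(z-s))) := by
        rw [show ((-z)*(2*(z-s)) - (4-z*s)*(-2)) = -(2*B^2) by rw [hBsq]; ring,
          hBsq]
        rw [← hBsq]; field_simp
      rw [h1]
      field_simp
      linear_combination hAsq
    rw [key]
    exact htot
  -- FTC
  have hftc := intervalIntegral.integral_eq_sub_of_hasDerivAt_of_le
    (by norm_num : (-2:ℝ) ≤ 2) hF_cont hderiv hg_int
  -- endpoint values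
  have hF2 : F 2 = z * (π / 2) - B * (π / 2) := by
    rw [hFdef]
    have e1 : ((2:ℝ) / 2) = 1 := by norm_num
    have e2 : ((4 - z * 2) / (2 * (z - 2)) : ℝ) = -1 := by
      rw [div_eq_iff (by nlinarith : (2 * (z - 2) : ℝ) ≠ 0)]; ring
    simp only [e1, e2, Real.arcsin_one, Real.arcsin_neg_one]
    norm_num
    try ring
  have hFm2 : F (-2) = -(z * (π / 2)) + B * (π / 2) := by
    rw [hFdef]
    have e1 : ((-2:ℝ) / 2) = -1 := by norm_num
    have e2 : ((4 - z * (-2)) / (2 * (z - (-2))) : ℝ) = 1 := by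
      rw [div_eq_iff (by nlinarith : (2 * (z - (-2)) : ℝ) ≠ 0)]; ring
    simp only [e1, e2, Real.arcsin_one, Real.arcsin_neg_one]
    norm_num
    try ring
  have hInt : (∫ s in (-2:ℝ)..2, g s) = π * z - π * B := by
    rw [hftc, hF2, hFm2]; ring
  -- conclude
  have hcong : ∀ s : ℝ, (z - s)⁻¹ * (Real.sqrt (4 - s ^ 2) / (2 * π))
      = g s * (2 * π)⁻¹ := by
    intro s; rw [hgdef]; simp only [div_eq_mul_inv]; ring
  simp only [hcong]
  rw [intervalIntegral.integral_mul_const, hInt]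
  have hπ : (π : ℝ) ≠ 0 := Real.pi_ne_zero
  field_simp
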